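/- Let c ∈ ℂ with c ≠ 0, let k₁, k₂ ∈ ℂ with (k₁,k₂) ≠ (0,0), and set a = 1, b = 0. The ℂ-bilinear product ∘ on A defined on basis elements by L_m∘L_n = cL_{m+n+1} − (n+1)L_{m+n}, L_m∘W_n = cW_{m+n+1} − (n+1)W_{m+n}, W_m∘L_n = cW_{m+n+1} and W_m∘W_n = k₁L_{m+n+1} + k₂W_{m+n+1} is left-symmetric, and it is a compatible left-symmetric algebraic structure on the Lie algebra Coeff(W(1,0)). -/

import Mathlib

noncomputable section

/-- `A` is the free `ℂ`-vector space with basis `{L m : m ∈ ℤ} ∪ {W m : m ∈ ℤ}`. -/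
abbrev A : Type := (ℤ ⊕ ℤ) →₀ ℂ

/-- The basis vector `L m`. -/
def L (m : ℤ) : A := Finsupp.single (Sum.inl m) 1

/-- The basis vector `W m`. -/
def W (m : ℤ) : A := Finsupp.single (Sum.inr m) 1


lemma single_inl (m : ℤ) (b : ℂ) : (Finsupp.single (Sum.inl m) b : A) = b • L m := by
  rw [L, Finsupp.smul_single', mul_one]

lemma single_inr (m : ℤ) (b : ℂ) : (Finsupp.single (Sum.inr m) b : A) = b • W m := by
  rw [W, Finsupp.smul_single', mul_one]

/-- Corollary 3.8 (10), on Coeff(W(1,0)), with `c ≠ 0`, `(k₁,k₂) ≠ (0,0)`. -/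
theorem stmt18 (c k₁ k₂ : ℂ) (hc : c ≠ 0) (hk : (k₁, k₂) ≠ (0, 0))
    -- `M` is the ℂ-bilinear product `∘` given on basis elements by:
    (M : A →ₗ[ℂ] A →ₗ[ℂ] A)
    (hLL : ∀ m n : ℤ, M (L m) (L n) = c • L (m + n + 1) - ((n : ℂ) + 1) • L (m + n))
    (hLW : ∀ m n : ℤ, M (L m) (W n) = c • W (m + n + 1) - ((n : ℂ) + 1) • W (m + n))
    (hWL : ∀ m n : ℤ, M (W m) (L n) = c • W (m + n + 1))
    (hWW : ∀ m n : ℤ, M (W m) (W n) = k₁ • L (m + n + 1) + k₂ • W (m + n + 1))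
    -- `B` is the ℂ-bilinear Lie bracket of Coeff(W(a,b)) on basis elements:
    (B : A →ₗ[ℂ] A →ₗ[ℂ] A)
    (hBLL : ∀ m n : ℤ, B (L m) (L n) = ((m : ℂ) - (n : ℂ)) • L (m + n))
    (hBLW : ∀ m n : ℤ, B (L m) (W n) =
      (((m : ℂ) + 1) * ((1 : ℂ) - 1) - ((n : ℂ) + 1)) • W (m + n)
        + (0 : ℂ) • W (m + n + 1))
    (hBWL : ∀ m n : ℤ, B (W n) (L m) = -B (L m) (W n))
    (hBWW : ∀ m n : ℤ, B (W m) (W n) = 0) :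
    -- `∘ = M` is left-symmetric:
    ((∀ x y z : A, M (M x y) z - M x (M y z) = M (M y x) z - M y (M x z)) ∧
    -- and compatible with the Lie bracket:
    (∀ x y : A, M x y - M y x = B x y)) := by
  constructor
  · intro x y z
    induction x using Finsupp.induction_linear with
    | zero => simp
    | add f g hf hg =>
        simp only [map_add, LinearMap.add_apply] at *
        rw [add_sub_add_comm, hf, hg]
        abel
    | single a b =>
        induction y using Finsupp.induction_linear with
        | zero => simp
        | add f g hf hg =>
            simp only [map_add, LinearMap.add_apply] at *
            rw [add_sub_add_comm, hf, hg]
            abel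
        | single a' b' =>
            induction z using Finsupp.induction_linear with
            | zero => simp
            | add f g hf hg =>
                simp only [map_add, LinearMap.add_apply] at *
                rw [add_sub_add_comm, hf, hg]
                abel
            | single a'' b'' =>
                rcases a with m | m <;> rcases a' with n | n <;> rcases a'' with p | p <;>
                  simp only [single_inl, single_inr, map_smul, LinearMap.smul_apply,
                    map_sub, map_add, LinearMap.sub_apply, LinearMap.add_apply,
                    hLL, hLW, hWL, hWW] <;>
                  push_cast <;> ring_nf <;> module
  · intro x y
    induction x using Finsupp.induction_linear with
    | zero => simp
    | add f g hf hg =>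
        simp only [map_add, LinearMap.add_apply] at *
        rw [add_sub_add_comm, hf, hg]
    | single a b =>
        induction y using Finsupp.induction_linear with
        | zero => simp
        | add f g hf hg =>
            simp only [map_add, LinearMap.add_apply] at *
            rw [add_sub_add_comm, hf, hg]
        | single a' b' =>
            rcases a with m | m <;> rcases a' with n | n <;>
              simp only [single_inl, single_inr, map_smul, LinearMap.smul_apply,
                map_sub, map_add, LinearMap.sub_apply, LinearMap.add_apply, map_neg,
                LinearMap.neg_apply, hLL, hLW, hWL, hWW, hBLL, hBLW, hBWL, hBWW] <;>
              push_cast <;> ring_nf <;> module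

end
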